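/- Fix α ∈ (0,1/2), γ ∈ (0,α) and ω ∈ (0,1). The function g(c) = P(Z1 > min{z_{1−α+γ}, Z̃2 + c}) is strictly decreasing in c on the interval [0, z_{1−γ}]. -/

import Mathlib

open MeasureTheory ProbabilityTheory Real

/-- The standard normal distribution on `ℝ`. -/
noncomputable def stdNormal : Measure ℝ := gaussianReal 0 1

/-- The product of two independent standard normals on `ℝ × ℝ`. -/
noncomputable def stdNormal2 : Measure (ℝ × ℝ) := stdNormal.prod stdNormal

/-- For `ω ∈ [0,1)`, the pair `(Z₁, Z̃₂)` with `Z₁ p = p.1` and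
`Z̃₂ p = ω * p.1 + √(ω - ω²) * p.2` is, under `stdNormal2`, a centered bivariate Gaussian
vector with covariance matrix `[[1, ω], [ω, ω]]`. -/
noncomputable def Ztilde2 (ω : ℝ) (p : ℝ × ℝ) : ℝ := ω * p.1 + Real.sqrt (ω - ω ^ 2) * p.2

instance : IsProbabilityMeasure stdNormal := by unfold stdNormal; infer_instance

instance : stdNormal.IsOpenPosMeasure :=
  ⟨fun U hU hne h0 => (hU.measure_ne_zero volume hne)
    ((gaussianReal_absolutelyContinuous' 0 one_ne_zero) h0)⟩

instance : IsProbabilityMeasure stdNormal2 := by unfold stdNormal2; infer_instance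

instance : stdNormal2.IsOpenPosMeasure := by unfold stdNormal2; infer_instance

lemma measurable_Ztilde2 (ω : ℝ) : Measurable (Ztilde2 ω) := by
  unfold Ztilde2; fun_prop

lemma continuous_Ztilde2 (ω : ℝ) : Continuous (Ztilde2 ω) := by
  unfold Ztilde2; fun_prop

/-- `c ↦ P(Z₁ > min{z_{1-α+γ}, Z̃₂ + c})` is strictly decreasing on `[0, z_{1-γ}]`. -/
theorem stmt1 (α γ ω : ℝ) (hα : α ∈ Set.Ioo (0 : ℝ) (1 / 2)) (hγ : γ ∈ Set.Ioo 0 α)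
    (hω : ω ∈ Set.Ioo (0 : ℝ) 1)
    (zαγ zγ : ℝ)
    (hzαγ : stdNormal (Set.Iic zαγ) = ENNReal.ofReal (1 - α + γ))
    (hzγ : stdNormal (Set.Iic zγ) = ENNReal.ofReal (1 - γ)) :
    StrictAntiOn
      (fun c : ℝ => (stdNormal2 {p : ℝ × ℝ | min zαγ (Ztilde2 ω p + c) < p.1}).toReal)
      (Set.Icc 0 zγ) := by
  intro c₁ _ c₂ _ hc
  set μ := stdNormal2
  have hs : 0 < Real.sqrt (ω - ω ^ 2) := by
    apply Real.sqrt_pos.2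
    nlinarith [hω.1, hω.2]
  -- the events
  set A : ℝ → Set (ℝ × ℝ) := fun c => {p : ℝ × ℝ | min zαγ (Ztilde2 ω p + c) < p.1} with hA
  have hAm : ∀ c, MeasurableSet (A c) := fun c =>
    measurableSet_lt (measurable_const.min ((measurable_Ztilde2 ω).add_const c)) measurable_fst
  -- the difference open set
  set U : Set (ℝ × ℝ) :=
    {p : ℝ × ℝ | Ztilde2 ω p + c₁ < p.1} ∩ {p : ℝ × ℝ | p.1 < Ztilde2 ω p + c₂}
      ∩ {p : ℝ × ℝ | p.1 < zαγ} with hU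
  have hUopen : IsOpen U := by
    refine (IsOpen.inter (IsOpen.inter ?_ ?_) ?_)
    · exact isOpen_lt ((continuous_Ztilde2 ω).add continuous_const) continuous_fst
    · exact isOpen_lt continuous_fst ((continuous_Ztilde2 ω).add continuous_const)
    · exact isOpen_lt continuous_fst continuous_const
  have hUne : U.Nonempty := by
    set t : ℝ := zαγ - 1
    set Z : ℝ := t - (c₁ + c₂) / 2
    refine ⟨(t, (Z - ω * t) / Real.sqrt (ω - ω ^ 2)), ?_, ?_⟩
    · have hZ : Ztilde2 ω (t, (Z - ω * t) / Real.sqrt (ω - ω ^ 2)) = Z := by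
        simp only [Ztilde2]
        rw [mul_div_cancel₀ _ hs.ne']; ring
      constructor <;> · simp only [Set.mem_setOf_eq, hZ]; simp only [Z, t]; linarith
    · simp only [Set.mem_setOf_eq]; simp only [t]; linarith
  have hUpos : 0 < μ U := hUopen.measure_pos μ hUne
  -- U ⊆ A c₁, U disjoint from A c₂, A c₂ ⊆ A c₁
  have hUA1 : U ⊆ A c₁ := by
    rintro p ⟨⟨h1, _⟩, _⟩
    show zαγ ⊓ (Ztilde2 ω p + c₁) < p.1
    exact lt_of_le_of_lt (min_le_right _ _) h1
  have hUA2 : Disjoint U (A c₂) := by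
    rw [Set.disjoint_left]
    rintro p ⟨⟨_, h2⟩, h3⟩ hmem
    have hmem' : zαγ ⊓ (Ztilde2 ω p + c₂) < p.1 := hmem
    exact absurd hmem' (not_lt.mpr (le_min h3.le h2.le))
  have hA21 : A c₂ ⊆ A c₁ := by
    intro p hp
    have hp' : zαγ ⊓ (Ztilde2 ω p + c₂) < p.1 := hp
    have h12 : Ztilde2 ω p + c₁ ≤ Ztilde2 ω p + c₂ := by linarith
    exact lt_of_le_of_lt (min_le_min le_rfl h12) hp'
  -- compare measures
  have key : μ (A c₂) < μ (A c₁) := by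
    calc μ (A c₂) < μ (A c₂) + μ U :=
          ENNReal.lt_add_right (measure_ne_top μ _) hUpos.ne'
      _ = μ (A c₂ ∪ U) := measure_union hUA2.symm hUopen.measurableSet ▸ rfl
      _ ≤ μ (A c₁) := measure_mono (Set.union_subset hA21 hUA1)
  exact (ENNReal.toReal_lt_toReal (measure_ne_top μ _) (measure_ne_top μ _)).2 key
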